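/- Let f = g·h be a factorization of nonzero multilinear polynomials over a field (each variable appears with individual degree at most 1 in f). Then g is multilinear and the number of monomials of g is at most the number of monomials of f. -/

import Mathlib

open AddMonoidAlgebra

theorem degreeOf_mul_eq_of_ne_zero {n : ℕ} {F : Type*} [Field F]
    (i : Fin n) (g h : MvPolynomial (Fin n) F) (hg : g ≠ 0) (hh : h ≠ 0) :
    (g * h).degreeOf i = g.degreeOf i + h.degreeOf i := by
  have hn : 0 < n := i.pos
  set z : Fin n := ⟨0, hn⟩ with hzdef
  set e : Fin n ≃ Fin n := Equiv.swap i z with hedef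
  set D : (Fin n →₀ ℕ) → Lex (Fin n →₀ ℕ) :=
    fun m => toLex (Finsupp.domCongr (M := ℕ) e m) with hDdef
  have hDinj : Function.Injective D := fun a b hab => by
    simpa using (Finsupp.domCongr (M := ℕ) e).injective (toLex.injective hab)
  have hadd : ∀ a b, D (a + b) = D a + D b := fun a b => by
    show toLex (Finsupp.domCongr (M := ℕ) e (a + b)) = _
    rw [map_add]
    rfl
  have hz : ∀ m : Fin n →₀ ℕ, ofLex (D m) z = m i := fun m => by
    simp [hDdef, Finsupp.domCongr_apply, Finsupp.equivMapDomain_apply, hedef]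
  have hzle : ∀ j : Fin n, z ≤ j := fun j => by
    simp [hzdef, Fin.le_def]
  have hmono : ∀ a b : Fin n →₀ ℕ, D a ≤ D b → a i ≤ b i := by
    intro a b hab
    rcases hab.eq_or_lt with heq | hlt
    · rw [hDinj heq]
    · rw [Finsupp.Lex.lt_iff] at hlt
      obtain ⟨k, hk1, hk2⟩ := hlt
      rcases (hzle k).lt_or_eq with hlt' | heq'
      · have := hk1 z hlt'
        rw [hz, hz] at this
        exact this.le
      · subst heq'
        rw [hz, hz] at hk2
        exact hk2.le
  have key : ∀ p : MvPolynomial (Fin n) F, p ≠ 0 →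
      ofLex (supDegree D p) z = p.degreeOf i := by
    intro p hp
    obtain ⟨a, ha, he⟩ := exists_supDegree_mem_support D hp
    rw [he, hz]
    refine le_antisymm (MvPolynomial.monomial_le_degreeOf i ha) ?_
    rw [MvPolynomial.degreeOf_le_iff]
    intro m hm
    exact hmono m a (he ▸ Finset.le_sup hm)
  have hpq : leadingCoeff D g * leadingCoeff D h ≠ 0 := by
    apply mul_ne_zero <;> rw [leadingCoeff_ne_zero hDinj] <;> assumption
  have hmul : supDegree D (g * h) = supDegree D g + supDegree D h :=
    supDegree_mul hDinj hadd hpq hg hh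
  have hk := key _ (mul_ne_zero hg hh)
  rw [hmul] at hk
  rw [← hk, ← key g hg, ← key h hh]
  rfl

/-- Factors of multilinear polynomials are multilinear and at least as sparse:
if `f = g·h` is multilinear (every variable of individual degree ≤ 1) with
`g, h ≠ 0`, then `g` is multilinear and `‖g‖ ≤ ‖f‖`. -/
theorem multilinear_factor_sparsity {n : ℕ} {F : Type*} [Field F]
    (f g h : MvPolynomial (Fin n) F) (hg : g ≠ 0) (hh : h ≠ 0)
    (hfgh : f = g * h)
    (hml : ∀ m ∈ f.support, ∀ i : Fin n, m i ≤ 1) :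
    (∀ m ∈ g.support, ∀ i : Fin n, m i ≤ 1) ∧
      g.support.card ≤ f.support.card := by
  have hdeg : ∀ i : Fin n, g.degreeOf i + h.degreeOf i ≤ 1 := by
    intro i
    rw [← degreeOf_mul_eq_of_ne_zero i g h hg hh, ← hfgh,
      MvPolynomial.degreeOf_le_iff]
    exact fun m hm => hml m hm i
  refine ⟨fun m hm i => le_trans (MvPolynomial.monomial_le_degreeOf i hm)
    (le_trans (Nat.le_add_right _ _) (hdeg i)), ?_⟩
  obtain ⟨m₀, hm₀⟩ := Finset.nonempty_iff_ne_empty.mpr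
    (fun hsupp => hh (MvPolynomial.support_eq_empty.mp hsupp))
  apply Finset.card_le_card_of_injOn (fun m => m + m₀)
  · intro m hm
    simp only [Finset.mem_coe] at hm ⊢
    rw [hfgh, MvPolynomial.mem_support_iff, MvPolynomial.coeff_mul]
    rw [Finset.sum_eq_single_of_mem (m, m₀)
      (Finset.HasAntidiagonal.mem_antidiagonal.mpr rfl) ?_]
    · exact mul_ne_zero (MvPolynomial.mem_support_iff.mp hm)
        (MvPolynomial.mem_support_iff.mp hm₀)
    · intro ab habmem habne
      by_contra hcon
      rcases mul_ne_zero_iff.mp hcon with ⟨h1, h2⟩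
      apply habne
      have hsum := Finset.HasAntidiagonal.mem_antidiagonal.mp habmem
      have hcoord : ∀ i : Fin n, ab.1 i = m i ∧ ab.2 i = m₀ i := by
        intro i
        have e1 : ab.1 i ≤ g.degreeOf i :=
          MvPolynomial.monomial_le_degreeOf i (MvPolynomial.mem_support_iff.mpr h1)
        have e2 : ab.2 i ≤ h.degreeOf i :=
          MvPolynomial.monomial_le_degreeOf i (MvPolynomial.mem_support_iff.mpr h2)
        have e3 : m i ≤ g.degreeOf i := MvPolynomial.monomial_le_degreeOf i hm
        have e4 : m₀ i ≤ h.degreeOf i := MvPolynomial.monomial_le_degreeOf i hm₀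
        have e5 : ab.1 i + ab.2 i = m i + m₀ i := by
          have := DFunLike.congr_fun hsum i
          simpa [Finsupp.add_apply] using this
        have e6 := hdeg i
        omega
      exact Prod.ext (Finsupp.ext fun i => (hcoord i).1)
        (Finsupp.ext fun i => (hcoord i).2)
  · intro a _ b _ hab
    exact add_right_cancel hab
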